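/- arXiv:1101.3630 — 7 statements merged into one kernel-verified Lean document; each statement's English description precedes it below -/
import Mathlib

section
/- Let C be the Hessian cubic X³+Y³+Z³-3aXYZ = 0 over a field k of characteristic not 2 or 3. For every point (X₀:Y₀:Z₀) on C, the point (X₀²-aY₀Z₀, Y₀²-aX₀Z₀, Z₀²-aX₀Y₀) satisfies the sextic equation G(U,V,W) = U⁶+V⁶+W⁶ - 6a²(U⁴VW+UV⁴W+UVW⁴) + (4a³-2)(U³V³+U³W³+V³W³) + (12a-3a⁴)U²V²W² = 0. That is, G(X²-aYZ, Y²-aXZ, Z²-aXY) is divisible by X³+Y³+Z³-3aXYZ as a polynomial in k[a][X,Y,Z]. -/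
open MvPolynomial

set_option maxHeartbeats 4000000
set_option maxRecDepth 8000

/-- Every point of the Hessian cubic `X³+Y³+Z³-3aXYZ = 0` is mapped by the Gauss map
`(X:Y:Z) ↦ (X²-aYZ : Y²-aXZ : Z²-aXY)` onto the sextic dual curve `G(U,V,W) = 0`;
equivalently `G(X²-aYZ, Y²-aXZ, Z²-aXY)` is divisible by `X³+Y³+Z³-3aXYZ`
as a polynomial in the four variables `a, X, Y, Z`. -/
theorem gauss_image_on_dual_sextic {k : Type*} [Field k]
    (h2 : (2 : k) ≠ 0) (h3 : (3 : k) ≠ 0) :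
    (∀ a x y z : k, x ^ 3 + y ^ 3 + z ^ 3 - 3 * a * x * y * z = 0 →
      (fun U V W : k =>
        U ^ 6 + V ^ 6 + W ^ 6
          - 6 * a ^ 2 * (U ^ 4 * V * W + U * V ^ 4 * W + U * V * W ^ 4)
          + (4 * a ^ 3 - 2) * (U ^ 3 * V ^ 3 + U ^ 3 * W ^ 3 + V ^ 3 * W ^ 3)
          + (12 * a - 3 * a ^ 4) * U ^ 2 * V ^ 2 * W ^ 2)
        (x ^ 2 - a * y * z) (y ^ 2 - a * x * z) (z ^ 2 - a * x * y) = 0) ∧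
    (∀ a x y z U V W : MvPolynomial (Fin 4) k,
      a = X 0 → x = X 1 → y = X 2 → z = X 3 →
      U = x ^ 2 - a * y * z → V = y ^ 2 - a * x * z → W = z ^ 2 - a * x * y →
      (x ^ 3 + y ^ 3 + z ^ 3 - 3 * a * x * y * z) ∣
        (U ^ 6 + V ^ 6 + W ^ 6
          - 6 * a ^ 2 * (U ^ 4 * V * W + U * V ^ 4 * W + U * V * W ^ 4)
          + (4 * a ^ 3 - 2) * (U ^ 3 * V ^ 3 + U ^ 3 * W ^ 3 + V ^ 3 * W ^ 3)
          + (12 * a - 3 * a ^ 4) * U ^ 2 * V ^ 2 * W ^ 2)) := by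
  constructor
  · intro a x y z h
    simp only []
    linear_combination ((1)*z^9 + (-1)*y^3*z^6 + (-1)*y^6*z^3 + (1)*y^9 + (-1)*x^3*z^6 + (2)*x^3*y^3*z^3 + (-1)*x^3*y^6 + (-1)*x^6*z^3 + (-1)*x^6*y^3 + (1)*x^9 + (-3)*a*x*y*z^7 + (6)*a*x*y^4*z^4 + (-3)*a*x*y^7*z + (6)*a*x^4*y*z^4 + (6)*a*x^4*y^4*z + (-3)*a*x^7*y*z + (-12)*a^2*x^2*y^2*z^5 + (-12)*a^2*x^2*y^5*z^2 + (-12)*a^2*x^5*y^2*z^2 + (8)*a^3*y^3*z^6 + (8)*a^3*y^6*z^3 + (8)*a^3*x^3*z^6 + (36)*a^3*x^3*y^3*z^3 + (8)*a^3*x^3*y^6 + (8)*a^3*x^6*z^3 + (8)*a^3*x^6*y^3 + (-6)*a^4*x*y*z^7 + (-36)*a^4*x*y^4*z^4 + (-6)*a^4*x*y^7*z + (-36)*a^4*x^4*y*z^4 + (-36)*a^4*x^4*y^4*z + (-6)*a^4*x^7*y*z + (42)*a^5*x^2*y^2*z^5 + (42)*a^5*x^2*y^5*z^2 + (42)*a^5*x^5*y^2*z^2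 + (-4)*a^6*y^3*z^6 + (-4)*a^6*y^6*z^3 + (-4)*a^6*x^3*z^6 + (-60)*a^6*x^3*y^3*z^3 + (-4)*a^6*x^3*y^6 + (-4)*a^6*x^6*z^3 + (-4)*a^6*x^6*y^3 + (12)*a^7*x*y^4*z^4 + (12)*a^7*x^4*y*z^4 + (12)*a^7*x^4*y^4*z + (-3)*a^8*x^2*y^2*z^5 + (-3)*a^8*x^2*y^5*z^2 + (-3)*a^8*x^5*y^2*z^2 + (1)*a^9*x^3*y^3*z^3) * h
  · intro a x y z U V W ha hx hy hz hU hV hW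
    subst ha hx hy hz hU hV hW
    exact ⟨(1)*X 3^9 + (-1)*X 2^3*X 3^6 + (-1)*X 2^6*X 3^3 + (1)*X 2^9 + (-1)*X 1^3*X 3^6 + (2)*X 1^3*X 2^3*X 3^3 + (-1)*X 1^3*X 2^6 + (-1)*X 1^6*X 3^3 + (-1)*X 1^6*X 2^3 + (1)*X 1^9 + (-3)*(X 0 : MvPolynomial (Fin 4) k)*X 1*X 2*X 3^7 + (6)*(X 0 : MvPolynomial (Fin 4) k)*X 1*X 2^4*X 3^4 + (-3)*(X 0 : MvPolynomial (Fin 4) k)*X 1*X 2^7*X 3 + (6)*(X 0 : MvPolynomial (Fin 4) k)*X 1^4*X 2*X 3^4 + (6)*(X 0 : MvPolynomial (Fin 4) k)*X 1^4*X 2^4*X 3 + (-3)*(X 0 : MvPolynomial (Fin 4) k)*X 1^7*X 2*X 3 + (-12)*(X 0 : MvPolynomial (Fin 4) k)^2*X 1^2*X 2^2*X 3^5 + (-12)*(X 0 : MvPolynomial (Fin 4) k)^2*X 1^2*X 2^5*X 3^2 + (-12)*(X 0 : MvPolynomial (Fin 4) k)^2*X 1^5*X 2^2*X 3^2 + (8)*(X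 0 : MvPolynomial (Fin 4) k)^3*X 2^3*X 3^6 + (8)*(X 0 : MvPolynomial (Fin 4) k)^3*X 2^6*X 3^3 + (8)*(X 0 : MvPolynomial (Fin 4) k)^3*X 1^3*X 3^6 + (36)*(X 0 : MvPolynomial (Fin 4) k)^3*X 1^3*X 2^3*X 3^3 + (8)*(X 0 : MvPolynomial (Fin 4) k)^3*X 1^3*X 2^6 + (8)*(X 0 : MvPolynomial (Fin 4) k)^3*X 1^6*X 3^3 + (8)*(X 0 : MvPolynomial (Fin 4) k)^3*X 1^6*X 2^3 + (-6)*(X 0 : MvPolynomial (Fin 4) k)^4*X 1*X 2*X 3^7 + (-36)*(X 0 : MvPolynomial (Fin 4) k)^4*X 1*X 2^4*X 3^4 + (-6)*(X 0 : MvPolynomial (Fin 4) k)^4*X 1*X 2^7*X 3 + (-36)*(X 0 : MvPolynomial (Fin 4) k)^4*X 1^4*X 2*X 3^4 + (-36)*(X 0 : MvPolynomial (Fin 4) k)^4*X 1^4*X 2^4*X 3 + (-6)*(X 0 : MvPolynomial (Fin 4) k)^4*X 1^7*X 2*X 3 + (42)*(X 0 : MvPolynomial (Fin 4) k)^5*X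 1^2*X 2^2*X 3^5 + (42)*(X 0 : MvPolynomial (Fin 4) k)^5*X 1^2*X 2^5*X 3^2 + (42)*(X 0 : MvPolynomial (Fin 4) k)^5*X 1^5*X 2^2*X 3^2 + (-4)*(X 0 : MvPolynomial (Fin 4) k)^6*X 2^3*X 3^6 + (-4)*(X 0 : MvPolynomial (Fin 4) k)^6*X 2^6*X 3^3 + (-4)*(X 0 : MvPolynomial (Fin 4) k)^6*X 1^3*X 3^6 + (-60)*(X 0 : MvPolynomial (Fin 4) k)^6*X 1^3*X 2^3*X 3^3 + (-4)*(X 0 : MvPolynomial (Fin 4) k)^6*X 1^3*X 2^6 + (-4)*(X 0 : MvPolynomial (Fin 4) k)^6*X 1^6*X 3^3 + (-4)*(X 0 : MvPolynomial (Fin 4) k)^6*X 1^6*X 2^3 + (12)*(X 0 : MvPolynomial (Fin 4) k)^7*X 1*X 2^4*X 3^4 + (12)*(X 0 : MvPolynomial (Fin 4) k)^7*X 1^4*X 2*X 3^4 + (12)*(X 0 : MvPolynomial (Fin 4) k)^7*X 1^4*X 2^4*X 3 + (-3)*(X 0 : MvPolynomial (Fin 4) k)^8*X 1^2*X 2^2*X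 3^5 + (-3)*(X 0 : MvPolynomial (Fin 4) k)^8*X 1^2*X 2^5*X 3^2 + (-3)*(X 0 : MvPolynomial (Fin 4) k)^8*X 1^5*X 2^2*X 3^2 + (1)*(X 0 : MvPolynomial (Fin 4) k)^9*X 1^3*X 2^3*X 3^3, by ring⟩
end

section
/- The six points (a:1:1), (1:a:1), (1:1:a), (ζ₃²:ζ₃:a), (ζ₃:a:ζ₃²), (a:ζ₃²:ζ₃) all lie on the conic U² + ζ₃V² + ζ₃²W² + (a+1)(ζ₃²UV + ζ₃UW + VW) = 0. -/
/-- The six cusps `(a:1:1)`, `(1:a:1)`, `(1:1:a)`, `(ζ₃²:ζ₃:a)`, `(ζ₃:a:ζ₃²)`,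
`(a:ζ₃²:ζ₃)` lie on the conic `U²+ζ₃V²+ζ₃²W²+(a+1)(ζ₃²UV+ζ₃UW+VW) = 0`. -/
theorem six_cusps_on_conic_three {k : Type*} [Field k]
    (h2 : (2 : k) ≠ 0) (h3 : (3 : k) ≠ 0)
    (ζ : k) (hζ : ζ ^ 2 + ζ + 1 = 0) (a : k)
    (P : k → k → k → Prop)
    (hP : ∀ U V W, P U V W ↔
      U ^ 2 + ζ * V ^ 2 + ζ ^ 2 * W ^ 2
        + (a + 1) * (ζ ^ 2 * (U * V) + ζ * (U * W) + V * W) = 0) :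
    P a 1 1 ∧ P 1 a 1 ∧ P 1 1 a ∧
    P (ζ ^ 2) ζ a ∧ P ζ a (ζ ^ 2) ∧ P a (ζ ^ 2) ζ := by
  have hz3 : ζ ^ 3 = 1 := by linear_combination (ζ - 1) * hζ
  have c := a ^ 2 + a + 1
  refine ⟨?_, ?_, ?_, ?_, ?_, ?_⟩ <;> rw [hP]
  · linear_combination (a ^ 2 + a + 1) * hζ
  · linear_combination (a ^ 2 + a + 1) * hζ
  · linear_combination (a ^ 2 + a + 1) * hζ
  · linear_combination (a ^ 2 + a + 1) * hζ
      + (ζ + (a ^ 2 + a + 1) + (a + 1) * ζ ^ 2) * hz3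
  · linear_combination (a ^ 2 + a + 1) * hζ
      + ((ζ ^ 3 + 1) + (a ^ 2 + a) + (a + 1) * ζ) * hz3
  · linear_combination (a ^ 2 + a + 1) * hζ
      + (ζ ^ 2 + (a ^ 2 + a + 1) * ζ + (a + 1)) * hz3
end

section
/- Let k be a field of characteristic not 2 or 3 and let a ∈ k. Substituting U(t) = a²t⁴-2at³+(a³+2)t²-2a²t+a, V(t) = a⁴t⁴+(1-3a³)t³+3a²t²-2at+1, W(t) = at⁴-(a³+1)t³+3a²t²-2at+1 into G(U,V,W) = U⁶+V⁶+W⁶ - 6a²(U⁴VW+UV⁴W+UVW⁴) + (4a³-2)(U³V³+U³W³+V³W³) + (12a-3a⁴)U²V²W² gives t⁶(t+1)²(t²-t+1)²(at-2)²((a+1)t-1)²((a²-a+1)t²+(1-2a)t+1)²(a²t²+1-at)², up to multiplication by a nonzero constant; in particular G(U(t),V(t),W(t)) is a square in k(a)(t) (being t⁶ times a perfect square of a polynomial). -/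
open Polynomial

set_option maxHeartbeats 1000000 in
/-- Substituting the parameterization of the rational quartic into the sextic `G`
gives, up to a nonzero constant (an element of `k[a]`), the polynomial
`t⁶(t+1)²(t²-t+1)²(at-2)²((a+1)t-1)²((a²-a+1)t²+(1-2a)t+1)²(a²t²+1-at)²`;
in particular `G(U(t),V(t),W(t))` is a square. Here we work in `k[a][t]`,
with `a = C X` and `t = X`. -/
theorem quartic_even_intersection {k : Type*} [Field k]
    (h2 : (2 : k) ≠ 0) (h3 : (3 : k) ≠ 0)
    (a t U V W Gsub prod : Polynomial (Polynomial k))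
    (ha : a = C Polynomial.X) (ht : t = Polynomial.X)
    (hU : U = a ^ 2 * t ^ 4 - 2 * a * t ^ 3 + (a ^ 3 + 2) * t ^ 2 - 2 * a ^ 2 * t + a)
    (hV : V = a ^ 4 * t ^ 4 + (1 - 3 * a ^ 3) * t ^ 3 + 3 * a ^ 2 * t ^ 2 - 2 * a * t + 1)
    (hW : W = a * t ^ 4 - (a ^ 3 + 1) * t ^ 3 + 3 * a ^ 2 * t ^ 2 - 2 * a * t + 1)
    (hG : Gsub = U ^ 6 + V ^ 6 + W ^ 6
        - 6 * a ^ 2 * (U ^ 4 * V * W + U * V ^ 4 * W + U * V * W ^ 4)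
        + (4 * a ^ 3 - 2) * (U ^ 3 * V ^ 3 + U ^ 3 * W ^ 3 + V ^ 3 * W ^ 3)
        + (12 * a - 3 * a ^ 4) * U ^ 2 * V ^ 2 * W ^ 2)
    (hprod : prod = t ^ 6 * (t + 1) ^ 2 * (t ^ 2 - t + 1) ^ 2 * (a * t - 2) ^ 2
        * ((a + 1) * t - 1) ^ 2
        * ((a ^ 2 - a + 1) * t ^ 2 + (1 - 2 * a) * t + 1) ^ 2
        * (a ^ 2 * t ^ 2 + 1 - a * t) ^ 2) :
    (∃ c : Polynomial k, c ≠ 0 ∧ Gsub = C c * prod) ∧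
    ∃ P : Polynomial (Polynomial k), Gsub = P ^ 2 := by
  have hX3 : ((Polynomial.X : Polynomial k) ^ 3 - 1) ≠ 0 := by
    intro h
    have := congrArg (fun p => Polynomial.coeff p 0) h
    simp at this
  have key : Gsub = C (((Polynomial.X : Polynomial k) ^ 3 - 1) ^ 4) * prod := by
    subst ha ht hU hV hW hG hprod
    simp only [map_pow, map_sub, map_one]
    ring
  constructor
  · exact ⟨_, pow_ne_zero 4 hX3, key⟩
  · refine ⟨(a ^ 3 - 1) ^ 2 * t ^ 3 * (t + 1) * (t ^ 2 - t + 1) * (a * t - 2)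
      * ((a + 1) * t - 1) * ((a ^ 2 - a + 1) * t ^ 2 + (1 - 2 * a) * t + 1)
      * (a ^ 2 * t ^ 2 + 1 - a * t), ?_⟩
    rw [key, hprod, ha]
    simp only [map_pow, map_sub, map_one]
    ring
end

section
/- Let k be a field of characteristic not 2 or 3, a ∈ k with a³ ≠ 1. The twisted discriminant (as defined by Δ = 81s₃²-54s₃s₁s₂-3s₁²s₂²+12s₁³s₃+12s₂³) of the monic cubic y³ - s₁y² + s₂y - s₃ with s₁ = 3at, s₂ = 3a²t², s₃ = (a³t⁶-1)/(t³+1) equals (9(1+a³t³)/(1+t³))², a square in k(a)(t). -/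
/-- The twisted discriminant of the cubic `y³ - s₁y² + s₂y - s₃` with `s₁ = 3at`,
`s₂ = 3a²t²`, `s₃ = (a³t⁶-1)/(t³+1)` equals `(9(1+a³t³)/(1+t³))²`, a square. -/
theorem farashahi_discriminant_square {k : Type*} [Field k]
    (h2 : (2 : k) ≠ 0) (h3 : (3 : k) ≠ 0)
    (a t : k) (ha : a ^ 3 ≠ 1) (ht : t ^ 3 ≠ -1)
    (s1 s2 s3 : k)
    (hs1 : s1 = 3 * a * t) (hs2 : s2 = 3 * a ^ 2 * t ^ 2)
    (hs3 : s3 = (a ^ 3 * t ^ 6 - 1) / (t ^ 3 + 1)) :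
    81 * s3 ^ 2 - 54 * s3 * s1 * s2 - 3 * s1 ^ 2 * s2 ^ 2
      + 12 * s1 ^ 3 * s3 + 12 * s2 ^ 3
    = (9 * (1 + a ^ 3 * t ^ 3) / (1 + t ^ 3)) ^ 2 := by
  have hd : t ^ 3 + 1 ≠ 0 := by
    intro h; exact ht (by linear_combination h)
  have hd' : (1 : k) + t ^ 3 ≠ 0 := by
    intro h; exact hd (by linear_combination h)
  subst hs1 hs2 hs3
  field_simp
  ring
end

section
/- Let k be a field of characteristic not 2 or 3 in which every element has a cube root, with a fixed cube-root map. Let a ∈ k with a³ ≠ 1 and t ∈ k with t³ ≠ -1. Set y = at - ∛((a³t³+1)/(t³+1)) and x = -t·∛((a³t³+1)/(t³+1)). Then x³ + y³ + 1 = 3axy, i.e., the point (x:y:1) lies on the Hessian cubic X³+Y³+Z³-3aXYZ = 0. -/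
/-- Farashahi's encoding: with `y = at - ∛((a³t³+1)/(t³+1))` and
`x = -t·∛((a³t³+1)/(t³+1))`, the point `(x:y:1)` lies on the Hessian cubic
`X³+Y³+Z³ = 3aXYZ`. -/
theorem farashahi_encoding {k : Type*} [Field k]
    (h2 : (2 : k) ≠ 0) (h3 : (3 : k) ≠ 0)
    (cbrt : k → k) (hcbrt : ∀ u : k, (cbrt u) ^ 3 = u)
    (a t : k) (ha : a ^ 3 ≠ 1) (ht : t ^ 3 ≠ -1)
    (x y : k)
    (hy : y = a * t - cbrt ((a ^ 3 * t ^ 3 + 1) / (t ^ 3 + 1)))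
    (hx : x = -t * cbrt ((a ^ 3 * t ^ 3 + 1) / (t ^ 3 + 1))) :
    x ^ 3 + y ^ 3 + 1 = 3 * a * x * y := by
  have hD : t ^ 3 + 1 ≠ 0 := fun h => ht (by linear_combination h)
  have h := hcbrt ((a ^ 3 * t ^ 3 + 1) / (t ^ 3 + 1))
  field_simp at h
  subst hx hy
  linear_combination -h
end

section
/- Let k be a field of characteristic not 2 or 3. The twisted discriminant Δ = 81s₃²-54s₃s₁s₂-3s₁²s₂²+12s₁³s₃+12s₂³ of the cubic x³ - s₁x² + s₂x - s₃ with s₁ = 1/t², s₂ = 1/(3t⁴), s₃ = (1/t⁶ - 6a/t² - 36b + 9a²t²)/36 equals δ² where δ = (-1/t⁶ - 108b - 18a/t² + 27a²t²)/12. -/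
/-- The twisted discriminant of the cubic `x³ - s₁x² + s₂x - s₃` with
`s₁ = 1/t²`, `s₂ = 1/(3t⁴)`, `s₃ = (1/t⁶ - 6a/t² - 36b + 9a²t²)/36` equals `δ²`
where `δ = (-1/t⁶ - 108b - 18a/t² + 27a²t²)/12`. -/
theorem icart_discriminant_square {k : Type*} [Field k]
    (h2 : (2 : k) ≠ 0) (h3 : (3 : k) ≠ 0)
    (a b t : k) (ht : t ≠ 0)
    (s1 s2 s3 δ : k)
    (hs1 : s1 = 1 / t ^ 2) (hs2 : s2 = 1 / (3 * t ^ 4))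
    (hs3 : s3 = (1 / t ^ 6 - 6 * a / t ^ 2 - 36 * b + 9 * a ^ 2 * t ^ 2) / 36)
    (hδ : δ = (-(1 / t ^ 6) - 108 * b - 18 * a / t ^ 2 + 27 * a ^ 2 * t ^ 2) / 12) :
    81 * s3 ^ 2 - 54 * s3 * s1 * s2 - 3 * s1 ^ 2 * s2 ^ 2
      + 12 * s1 ^ 3 * s3 + 12 * s2 ^ 3 = δ ^ 2 := by
  have h6 : (6 : k) ≠ 0 := by
    have e : (6 : k) = 2 * 3 := by norm_num
    rw [e]; exact mul_ne_zero h2 h3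
  have h36 : (36 : k) ≠ 0 := by
    have e : (36 : k) = 6 * 6 := by norm_num
    rw [e]; exact mul_ne_zero h6 h6
  have h1296 : (1296 : k) ≠ 0 := by
    have e : (1296 : k) = 36 * 36 := by norm_num
    rw [e]; exact mul_ne_zero h36 h36
  have h12 : (12 : k) ≠ 0 := by
    have e : (12 : k) = 2 * 6 := by norm_num
    rw [e]; exact mul_ne_zero h2 h6
  have e1 : s1 * t ^ 2 = 1 := by rw [hs1]; field_simp
  have e2 : s2 * (3 * t ^ 4) = 1 := by rw [hs2]; field_simp
  have e3 : s3 * (36 * t ^ 6)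
      = 1 - 6 * a * t ^ 4 - 36 * b * t ^ 6 + 9 * a ^ 2 * t ^ 8 := by
    rw [hs3]; field_simp
  have e4 : δ * (12 * t ^ 6)
      = -1 - 18 * a * t ^ 4 - 108 * b * t ^ 6 + 27 * a ^ 2 * t ^ 8 := by
    rw [hδ]; field_simp [h12]; ring
  have key : (81 * s3 ^ 2 - 54 * s3 * s1 * s2 - 3 * s1 ^ 2 * s2 ^ 2
      + 12 * s1 ^ 3 * s3 + 12 * s2 ^ 3 - δ ^ 2) * (1296 * t ^ 12) = 0 := by
    linear_combination
      (-648 * (s3 * (36 * t ^ 6)) * (s2 * (3 * t ^ 4))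
        - 432 * (s1 * t ^ 2 + 1) * (s2 * (3 * t ^ 4)) ^ 2
        + 432 * ((s1 * t ^ 2) ^ 2 + s1 * t ^ 2 + 1) * (s3 * (36 * t ^ 6))) * e1
      + (-648 * (s3 * (36 * t ^ 6)) - 432 * (s2 * (3 * t ^ 4) + 1)
        + 576 * ((s2 * (3 * t ^ 4)) ^ 2 + s2 * (3 * t ^ 4) + 1)) * e2
      + (81 * (s3 * (36 * t ^ 6)
          + (1 - 6 * a * t ^ 4 - 36 * b * t ^ 6 + 9 * a ^ 2 * t ^ 8)) - 216) * e3
      + (-9 * (δ * (12 * t ^ 6)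
          + (-1 - 18 * a * t ^ 4 - 108 * b * t ^ 6 + 27 * a ^ 2 * t ^ 8))) * e4
  have hne : (1296 : k) * t ^ 12 ≠ 0 := mul_ne_zero h1296 (pow_ne_zero _ ht)
  have := (mul_eq_zero.mp key).resolve_right hne
  linear_combination this
end

section
/- Let k be a field of characteristic not 2 or 3 in which every element has a cube root, with a fixed cube-root map ∛. Let a, b ∈ k and t ∈ k, t ≠ 0. Set x = 1/(3t²) + ∛(a²t²/4 - 1/(108t⁶) - b - a/(6t²)) and y = 1/(6t³) - at/2 - x/t. Then y² = x³ + ax + b. -/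
/-- Icart's encoding: with
`x = 1/(3t²) + ∛(a²t²/4 - 1/(108t⁶) - b - a/(6t²))` and
`y = 1/(6t³) - at/2 - x/t`, the point `(x, y)` lies on `y² = x³ + ax + b`. -/
theorem icart_encoding {k : Type*} [Field k]
    (h2 : (2 : k) ≠ 0) (h3 : (3 : k) ≠ 0)
    (cbrt : k → k) (hcbrt : ∀ u : k, (cbrt u) ^ 3 = u)
    (a b t : k) (ht : t ≠ 0)
    (x y : k)
    (hx : x = 1 / (3 * t ^ 2)
        + cbrt (a ^ 2 * t ^ 2 / 4 - 1 / (108 * t ^ 6) - b - a / (6 * t ^ 2)))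
    (hy : y = 1 / (6 * t ^ 3) - a * t / 2 - x / t) :
    y ^ 2 = x ^ 3 + a * x + b := by
  have h6 : (6 : k) ≠ 0 := by
    have : (6 : k) = 2 * 3 := by norm_num
    rw [this]; exact mul_ne_zero h2 h3
  set c := cbrt (a ^ 2 * t ^ 2 / 4 - 1 / (108 * t ^ 6) - b - a / (6 * t ^ 2)) with hc
  have h : c ^ 3 = a ^ 2 * t ^ 2 / 4 - 1 / (108 * t ^ 6) - b - a / (6 * t ^ 2) := hcbrt _
  subst hy hx
  have h108 : (108 : k) ≠ 0 := by
    have : (108 : k) = 2 * 2 * 3 * 3 * 3 := by norm_num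
    rw [this]; simp [h2, h3]
  have h4 : (4 : k) ≠ 0 := by
    have : (4 : k) = 2 * 2 := by norm_num
    rw [this]; exact mul_ne_zero h2 h2
  have h1296 : (1296 : k) ≠ 0 := by
    have : (1296 : k) = 2^4 * 3^4 := by norm_num
    rw [this]; exact mul_ne_zero (pow_ne_zero _ h2) (pow_ne_zero _ h3)
  field_simp at h ⊢
  apply mul_left_cancel₀ h2
  linear_combination (-3) * h
end
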